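/- For every prime p and every positive integer t there exist a positive integer m and a finite set S ⊆ (ℤ/pℤ)^m × (ℤ/pℤ)^m with |S| = t such that |π₁(S)| + |π₂(S)| + |{x + y : (x, y) ∈ S}| ≤ t + 3, where π₁(S) and π₂(S) denote the images of S under the two coordinate projections. -/

import Mathlib

private def iotaFn (p m : ℕ) (j : ℕ) : Fin m → ZMod p :=
  fun i => ((j / p ^ (i : ℕ) : ℕ) : ZMod p)

private def eFn (p m : ℕ) : Fin m → ZMod p :=
  fun i => if (i : ℕ) = 0 then 1 else 0

private lemma iota_inj (p : ℕ) (hp : 2 ≤ p) :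
    ∀ m a b, a < p ^ m → b < p ^ m → iotaFn p m a = iotaFn p m b → a = b := by
  intro m
  induction m with
  | zero =>
    intro a b ha hb _
    simp only [pow_zero, Nat.lt_one_iff] at ha hb
    omega
  | succ m ih =>
    intro a b ha hb h
    have h0 : (a : ZMod p) = (b : ZMod p) := by
      have := congrFun h ⟨0, Nat.succ_pos m⟩
      simpa [iotaFn] using this
    have hmod : a % p = b % p := (ZMod.natCast_eq_natCast_iff a b p).mp h0
    have hdiv : a / p = b / p := by
      apply ih (a / p) (b / p)
      · rw [Nat.div_lt_iff_lt_mul (by omega : 0 < p)]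
        calc a < p ^ (m + 1) := ha
          _ = p ^ m * p := pow_succ p m
      · rw [Nat.div_lt_iff_lt_mul (by omega : 0 < p)]
        calc b < p ^ (m + 1) := hb
          _ = p ^ m * p := pow_succ p m
      · funext i
        have := congrFun h ⟨(i : ℕ) + 1, by omega⟩
        simpa [iotaFn, Nat.div_div_eq_div_mul, pow_succ'] using this
    calc a = p * (a / p) + a % p := (Nat.div_add_mod a p).symm
      _ = p * (b / p) + b % p := by rw [hdiv, hmod]
      _ = b := Nat.div_add_mod b p

private lemma iota_add_e (p m : ℕ) (hp : 2 ≤ p) (j : ℕ) :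
    ∃ j', j' ≤ j + 1 ∧ iotaFn p m j + eFn p m = iotaFn p m j' := by
  by_cases hd : p ∣ (j + 1)
  · obtain ⟨q, hq⟩ := hd
    obtain ⟨qq, rfl⟩ : ∃ qq, q = qq + 1 := by
      refine ⟨q - 1, ?_⟩
      rcases Nat.eq_zero_or_pos q with h | h
      · subst h; simp at hq
      · omega
    have hq' : j + 1 = p * qq + p := by rw [hq]; ring
    refine ⟨j + 1 - p, by omega, ?_⟩
    funext i
    rcases i with ⟨iv, hi⟩
    match iv with
    | 0 =>
      show ((j / p ^ 0 : ℕ) : ZMod p) + 1 = (((j + 1 - p) / p ^ 0 : ℕ) : ZMod p)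
      rw [pow_zero, Nat.div_one, Nat.div_one]
      have h1 : ((j : ZMod p) + 1) = ((j + 1 : ℕ) : ZMod p) := by push_cast; ring
      rw [h1, show (j + 1 : ℕ) = (j + 1 - p) + p from by omega, Nat.cast_add,
        ZMod.natCast_self, add_zero]
      congr 1
      omega
    | v + 1 =>
      show ((j / p ^ (v + 1) : ℕ) : ZMod p) + (0 : ZMod p)
          = (((j + 1 - p) / p ^ (v + 1) : ℕ) : ZMod p)
      rw [add_zero]
      congr 1
      have hj2 : j + 1 - p = p * qq := by omega
      have hj : j = p * qq + (p - 1) := by omega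
      rw [hj2, hj, pow_succ', ← Nat.div_div_eq_div_mul, ← Nat.div_div_eq_div_mul,
        Nat.mul_add_div (by omega : 0 < p), Nat.div_eq_of_lt (by omega : p - 1 < p),
        add_zero, Nat.mul_div_cancel_left _ (by omega : 0 < p)]
  · refine ⟨j + 1, le_refl _, ?_⟩
    funext i
    rcases i with ⟨iv, hi⟩
    match iv with
    | 0 =>
      show ((j / p ^ 0 : ℕ) : ZMod p) + 1 = (((j + 1) / p ^ 0 : ℕ) : ZMod p)
      rw [pow_zero, Nat.div_one, Nat.div_one]; push_cast; ring
    | v + 1 =>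
      show ((j / p ^ (v + 1) : ℕ) : ZMod p) + (0 : ZMod p)
          = (((j + 1) / p ^ (v + 1) : ℕ) : ZMod p)
      rw [add_zero]
      congr 1
      rw [Nat.succ_div,
        if_neg (fun hdvd => hd (dvd_trans (dvd_pow_self p (Nat.succ_ne_zero v)) hdvd))]
      exact (Nat.add_zero _).symm

/-- A `(t+3, t)`-configuration in the addition table of `(ℤ/pℤ)^m` for some
`m`: `t` cells spanning at most `t + 3` rows, columns and labels. -/
theorem stmt_8 :
    ∀ p : ℕ, p.Prime → ∀ t : ℕ, 0 < t →
    ∃ m : ℕ, 0 < m ∧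
      ∃ S : Finset ((Fin m → ZMod p) × (Fin m → ZMod p)), S.card = t ∧
        (S.image Prod.fst).card + (S.image Prod.snd).card
          + (S.image fun xy => xy.1 + xy.2).card ≤ t + 3 := by
  intro p hp t ht
  haveI : Fact p.Prime := ⟨hp⟩
  have hp2 : 2 ≤ p := hp.two_le
  refine ⟨t, ht, ?_⟩
  set m := t with hm
  have hpm : t ≤ p ^ m := le_of_lt (lt_of_lt_of_le (Nat.lt_pow_self (n := t) (by omega : 1 < 2))
    (Nat.pow_le_pow_left hp2 t))
  have hene : eFn p m ≠ 0 := by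
    intro h
    have := congrFun h ⟨0, ht⟩
    simp [eFn] at this
  classical
  set f : ℕ → (Fin m → ZMod p) × (Fin m → ZMod p) :=
    fun n => (if n % 2 = 0 then (0 : Fin m → ZMod p) else eFn p m, iotaFn p m (n / 2)) with hf
  refine ⟨(Finset.range t).image f, ?_, ?_⟩
  · rw [Finset.card_image_of_injOn, Finset.card_range]
    intro a ha b hb hab
    simp only [Finset.coe_range, Set.mem_Iio] at ha hb
    have h2 : iotaFn p m (a / 2) = iotaFn p m (b / 2) := congrArg Prod.snd hab
    have hd : a / 2 = b / 2 :=
      iota_inj p hp2 m _ _ (by omega) (by omega) h2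
    have h1 := congrArg Prod.fst hab
    simp only [hf] at h1
    by_cases hae : a % 2 = 0 <;> by_cases hbe : b % 2 = 0
    · omega
    · rw [if_pos hae, if_neg hbe] at h1; exact absurd h1.symm hene
    · rw [if_neg hae, if_pos hbe] at h1; exact absurd h1 hene
    · omega
  · have b1 : ((Finset.range t).image f |>.image Prod.fst).card ≤ 2 := by
      have hsub : ((Finset.range t).image f |>.image Prod.fst) ⊆
          insert (0 : Fin m → ZMod p) ({eFn p m} : Finset (Fin m → ZMod p)) := by
        intro x hx
        simp only [Finset.mem_image] at hx
        obtain ⟨xy, ⟨n, _, rfl⟩, rfl⟩ := hx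
        simp only [hf, Finset.mem_insert, Finset.mem_singleton]
        by_cases h : n % 2 = 0
        · left; rw [if_pos h]
        · right; rw [if_neg h]
      refine le_trans (Finset.card_le_card hsub) ?_
      refine le_trans (Finset.card_insert_le _ _) ?_
      simp
    have b2 : ((Finset.range t).image f |>.image Prod.snd).card ≤ (t + 1) / 2 := by
      have hsub : ((Finset.range t).image f |>.image Prod.snd) ⊆
          (Finset.range ((t + 1) / 2)).image (iotaFn p m) := by
        intro x hx
        simp only [Finset.mem_image] at hx ⊢
        obtain ⟨xy, ⟨n, hn, rfl⟩, rfl⟩ := hx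
        rw [Finset.mem_range] at hn
        exact ⟨n / 2, Finset.mem_range.mpr (by omega), rfl⟩
      calc _ ≤ _ := Finset.card_le_card hsub
        _ ≤ (Finset.range ((t + 1) / 2)).card := Finset.card_image_le
        _ = (t + 1) / 2 := Finset.card_range _
    have b3 : ((Finset.range t).image f |>.image fun xy => xy.1 + xy.2).card ≤ (t + 2) / 2 := by
      have hsub : ((Finset.range t).image f |>.image fun xy => xy.1 + xy.2) ⊆
          (Finset.range ((t + 2) / 2)).image (iotaFn p m) := by
        intro x hx
        simp only [Finset.mem_image] at hx ⊢
        obtain ⟨xy, ⟨n, hn, rfl⟩, rfl⟩ := hx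
        rw [Finset.mem_range] at hn
        simp only [hf]
        by_cases h : n % 2 = 0
        · refine ⟨n / 2, Finset.mem_range.mpr (by omega), ?_⟩
          rw [if_pos h, zero_add]
        · obtain ⟨j', hj', hj'eq⟩ := iota_add_e p m hp2 (n / 2)
          refine ⟨j', Finset.mem_range.mpr (by omega), ?_⟩
          rw [if_neg h, add_comm, hj'eq]
      calc _ ≤ _ := Finset.card_le_card hsub
        _ ≤ (Finset.range ((t + 2) / 2)).card := Finset.card_image_le
        _ = (t + 2) / 2 := Finset.card_range _
    omega
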